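/- Let f : ℝ^p → (0, ∞) be a continuous probability density (f > 0 everywhere and ∫_{ℝ^p} f(t) dt = 1), let C ⊂ ℝ^p be nonempty and compact, let B ∈ ℝ^{p×p}, and let Σ : ℝ^p → ℝ^{p×p} be continuous with Σ(z) invertible for every z. Define the Markov transition kernel P(z, A) = ∫_A f(Σ(z)^{-1}(t − Bᵀz))·|det Σ(z)|^{-1} dt for Borel sets A ⊆ ℝ^p. Then: (i) there exist δ > 0 and a Borel probability measure ν on ℝ^p such that P(z, A) ≥ δ·ν(A) for all z ∈ C and all Borel A (minorization); and (ii) if in addition C has positive Lebesgue measure, then P(z, C) > 0 for every z ∈ ℝ^p. -/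

import Mathlib

open MeasureTheory

/-- The one-step Markov transition probability of the chain
`Z_t = BᵀZ_{t-1} + Σ(Z_{t-1})η_t` with innovation density `f`:
`P(z, A) = ∫_A f(Σ(z)⁻¹(t - Bᵀz))·|det Σ(z)|⁻¹ dt`. -/
noncomputable def varTransition {p : ℕ} (f : EuclideanSpace ℝ (Fin p) → ℝ)
    (B : Matrix (Fin p) (Fin p) ℝ) (S : EuclideanSpace ℝ (Fin p) → Matrix (Fin p) (Fin p) ℝ)
    (z : EuclideanSpace ℝ (Fin p)) (A : Set (EuclideanSpace ℝ (Fin p))) : ℝ :=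
  ∫ t in A, f (Matrix.toEuclideanLin (S z)⁻¹ (t - Matrix.toEuclideanLin B.transpose z)) *
    |(S z).det|⁻¹

open Matrix

variable {p : ℕ}

private lemma det_toEuc (M : Matrix (Fin p) (Fin p) ℝ) :
    LinearMap.det (Matrix.toEuclideanLin M) = M.det := by
  rw [Matrix.toEuclideanLin_eq_toLin, LinearMap.det_toLin]

private lemma integrable_g (f : EuclideanSpace ℝ (Fin p) → ℝ) (hfi : Integrable f)
    (M : Matrix (Fin p) (Fin p) ℝ) (hM : M.det ≠ 0) (c : EuclideanSpace ℝ (Fin p)) (d : ℝ) :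
    Integrable (fun t : EuclideanSpace ℝ (Fin p) =>
      f (Matrix.toEuclideanLin M (t - c)) * d) := by
  set L : EuclideanSpace ℝ (Fin p) →ₗ[ℝ] EuclideanSpace ℝ (Fin p) := Matrix.toEuclideanLin M
  have hdet : LinearMap.det L ≠ 0 := by rw [det_toEuc]; exact hM
  have hmap : Measure.map L volume = ENNReal.ofReal |(LinearMap.det L)⁻¹| • volume :=
    Measure.map_linearMap_addHaar_eq_smul_addHaar volume hdet
  have h1 : Integrable f (Measure.map L volume) := by
    rw [hmap]; exact hfi.smul_measure ENNReal.ofReal_ne_top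
  have hemb : MeasurableEmbedding (L : EuclideanSpace ℝ (Fin p) → EuclideanSpace ℝ (Fin p)) := by
    have := (LinearMap.equivOfDetNeZero L hdet).toContinuousLinearEquiv.toHomeomorph.measurableEmbedding
    exact this
  have h2 : Integrable (f ∘ L) volume := hemb.integrable_map_iff.mp h1
  have h3 : Integrable (fun t => (f ∘ L) (t - c)) volume := h2.comp_sub_right c
  exact h3.mul_const d

private lemma cont_g (f : EuclideanSpace ℝ (Fin p) → ℝ) (hf_cont : Continuous f)
    (B : Matrix (Fin p) (Fin p) ℝ)
    (S : EuclideanSpace ℝ (Fin p) → Matrix (Fin p) (Fin p) ℝ)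
    (hS_cont : ∀ i j, Continuous fun z => S z i j)
    (hS_inv : ∀ z, IsUnit (S z).det) :
    Continuous fun q : EuclideanSpace ℝ (Fin p) × EuclideanSpace ℝ (Fin p) =>
      f (Matrix.toEuclideanLin (S q.1)⁻¹ (q.2 - Matrix.toEuclideanLin B.transpose q.1)) *
        |(S q.1).det|⁻¹ := by
  have hS : Continuous S := continuous_pi fun i => continuous_pi fun j => hS_cont i j
  have hdet : Continuous fun z => (S z).det := hS.matrix_det
  have hne : ∀ z, (S z).det ≠ 0 := fun z => (hS_inv z).ne_zero
  have habs : Continuous fun z : EuclideanSpace ℝ (Fin p) => |(S z).det|⁻¹ :=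
    (hdet.abs).inv₀ fun z => abs_ne_zero.mpr (hne z)
  have hSinv : Continuous fun z => (S z)⁻¹ := by
    have : (fun z => (S z)⁻¹) = fun z => ((S z).det)⁻¹ • (S z).adjugate := by
      funext z; rw [Matrix.inv_def, Ring.inverse_eq_inv']
    rw [this]
    exact (hdet.inv₀ hne).smul hS.matrix_adjugate
  -- the linear image of Bᵀ
  have hc : Continuous fun z : EuclideanSpace ℝ (Fin p) =>
      Matrix.toEuclideanLin B.transpose z :=
    (Matrix.toEuclideanLin B.transpose).continuous_of_finiteDimensional
  -- inner vector continuity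
  have hv : Continuous fun q : EuclideanSpace ℝ (Fin p) × EuclideanSpace ℝ (Fin p) =>
      Matrix.toEuclideanLin (S q.1)⁻¹ (q.2 - Matrix.toEuclideanLin B.transpose q.1) := by
    have hu : Continuous fun q : EuclideanSpace ℝ (Fin p) × EuclideanSpace ℝ (Fin p) =>
        q.2 - Matrix.toEuclideanLin B.transpose q.1 :=
      continuous_snd.sub (hc.comp continuous_fst)
    have key : ∀ (M : Matrix (Fin p) (Fin p) ℝ) (v : EuclideanSpace ℝ (Fin p)),
        Matrix.toEuclideanLin M v =
          (WithLp.equiv 2 (Fin p → ℝ)).symm (M *ᵥ (WithLp.equiv 2 (Fin p → ℝ)) v) :=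
      fun M v => rfl
    simp only [key]
    refine (PiLp.continuous_toLp (p := 2) (β := fun _ : Fin p => ℝ)).comp ?_
    refine continuous_pi fun i => ?_
    have : Continuous fun q : EuclideanSpace ℝ (Fin p) × EuclideanSpace ℝ (Fin p) =>
        (WithLp.equiv 2 (Fin p → ℝ)) (q.2 - Matrix.toEuclideanLin B.transpose q.1) :=
      (PiLp.continuous_ofLp (p := 2) (β := fun _ : Fin p => ℝ)).comp hu
    simp only [Matrix.mulVec, dotProduct]
    exact continuous_finset_sum _ fun j _ =>
      (((continuous_apply j).comp ((continuous_apply i).comp (hSinv.comp continuous_fst)))).mul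
        ((continuous_apply j).comp this)
  exact (hf_cont.comp hv).mul (habs.comp continuous_fst)

set_option maxHeartbeats 1000000 in
/-- **Minorization over a compact set for the VAR transition kernel.**
If the innovation density `f` is continuous and everywhere positive, `C` is nonempty and
compact, and `Σ` is continuous with `Σ(z)` invertible for all `z`, then (i) there are `δ > 0`
and a Borel probability measure `ν` with `P(z, A) ≥ δ·ν(A)` for all `z ∈ C` and Borel `A`;
and (ii) if `C` has positive Lebesgue measure then `P(z, C) > 0` for every `z`. -/
theorem varTransition_minorization {p : ℕ}
    (f : EuclideanSpace ℝ (Fin p) → ℝ) (hf_cont : Continuous f) (hf_pos : ∀ t, 0 < f t)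
    (hf_int : (∫ t : EuclideanSpace ℝ (Fin p), f t) = 1)
    (C : Set (EuclideanSpace ℝ (Fin p))) (hC_ne : C.Nonempty) (hC_cpt : IsCompact C)
    (B : Matrix (Fin p) (Fin p) ℝ)
    (S : EuclideanSpace ℝ (Fin p) → Matrix (Fin p) (Fin p) ℝ)
    (hS_cont : ∀ i j, Continuous fun z => S z i j)
    (hS_inv : ∀ z, IsUnit (S z).det) :
    (∃ δ : ℝ, 0 < δ ∧ ∃ ν : Measure (EuclideanSpace ℝ (Fin p)), IsProbabilityMeasure ν ∧
      ∀ z ∈ C, ∀ A : Set (EuclideanSpace ℝ (Fin p)), MeasurableSet A →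
        δ * (ν A).toReal ≤ varTransition f B S z A) ∧
    (0 < volume C → ∀ z : EuclideanSpace ℝ (Fin p), 0 < varTransition f B S z C) := by
  -- notation
  set g : EuclideanSpace ℝ (Fin p) → EuclideanSpace ℝ (Fin p) → ℝ := fun z t =>
    f (Matrix.toEuclideanLin (S z)⁻¹ (t - Matrix.toEuclideanLin B.transpose z)) *
      |(S z).det|⁻¹ with hg_def
  have hg_pos : ∀ z t : EuclideanSpace ℝ (Fin p), 0 < g z t := by
    intro z t
    exact mul_pos (hf_pos _) (inv_pos.mpr (abs_pos.mpr ((hS_inv z).ne_zero)))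
  -- integrability of f
  have hfi : Integrable f := by
    by_contra h
    rw [integral_undef h] at hf_int
    norm_num at hf_int
  -- integrability of g z
  have hgi : ∀ z : EuclideanSpace ℝ (Fin p), Integrable (g z) := by
    intro z
    have hdet : ((S z)⁻¹).det ≠ 0 := by
      rw [Matrix.det_nonsing_inv]
      simpa [Ring.inverse_eq_inv'] using inv_ne_zero (hS_inv z).ne_zero
    exact integrable_g f hfi (S z)⁻¹ hdet (Matrix.toEuclideanLin B.transpose z) _
  have hg_cont : Continuous fun q : EuclideanSpace ℝ (Fin p) × EuclideanSpace ℝ (Fin p) => g q.1 q.2 :=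
    cont_g f hf_cont B S hS_cont hS_inv
  constructor
  · -- part (i)
    set K : Set (EuclideanSpace ℝ (Fin p)) := Metric.closedBall 0 1 with hK_def
    have hK_cpt : IsCompact K := isCompact_closedBall 0 1
    have hK_meas : MeasurableSet K := measurableSet_closedBall
    have hK_pos : 0 < volume K := Metric.measure_closedBall_pos volume 0 one_pos
    have hK_lt : volume K < ⊤ := hK_cpt.measure_lt_top
    have hK_ne : (0 : EuclideanSpace ℝ (Fin p)) ∈ K := Metric.mem_closedBall_self zero_le_one
    obtain ⟨q0, hq0, hmin⟩ := (hC_cpt.prod hK_cpt).exists_isMinOn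
      (hC_ne.prod ⟨0, hK_ne⟩) hg_cont.continuousOn
    rw [isMinOn_iff] at hmin
    set m : ℝ := g q0.1 q0.2 with hm_def
    have hm_pos : 0 < m := hg_pos _ _
    refine ⟨m * (volume K).toReal, mul_pos hm_pos (ENNReal.toReal_pos hK_pos.ne' hK_lt.ne), ?_⟩
    refine ⟨(volume K)⁻¹ • volume.restrict K, ⟨?_⟩, ?_⟩
    · simp [Measure.restrict_apply, ENNReal.inv_mul_cancel hK_pos.ne' hK_lt.ne]
    · intro z hz A hA
      have hν : (((volume K)⁻¹ • volume.restrict K) A).toReal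
          = (volume K).toReal⁻¹ * (volume (A ∩ K)).toReal := by
        simp [Measure.restrict_apply hA, ENNReal.toReal_mul]
      rw [hν]
      have hAK_lt : volume (A ∩ K) ≠ ⊤ :=
        (lt_of_le_of_lt (measure_mono Set.inter_subset_right) hK_lt).ne
      have hvol : m * (volume K).toReal * ((volume K).toReal⁻¹ * (volume (A ∩ K)).toReal)
          = m * (volume (A ∩ K)).toReal := by
        have hKne : (volume K).toReal ≠ 0 := (ENNReal.toReal_pos hK_pos.ne' hK_lt.ne).ne'
        field_simp
      rw [hvol]
      have hlow : m * (volume (A ∩ K)).toReal ≤ ∫ t in A ∩ K, g z t := by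
        refine setIntegral_ge_of_const_le_real (hA.inter hK_meas) hAK_lt ?_ ((hgi z).integrableOn)
        intro t ht
        exact hmin (z, t) (Set.mk_mem_prod hz ht.2)
      refine hlow.trans ?_
      refine setIntegral_mono_set ((hgi z).integrableOn) ?_ ?_
      · exact Filter.Eventually.of_forall fun t => (hg_pos z t).le
      · exact Filter.Eventually.of_forall fun t ht => ht.1
  · -- part (ii)
    intro hC_vol z
    have hsupp : Function.support (g z) = Set.univ :=
      Set.eq_univ_of_forall fun t => (hg_pos z t).ne'
    have : 0 < ∫ t in C, g z t := by
      rw [setIntegral_pos_iff_support_of_nonneg_ae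
        (Filter.Eventually.of_forall fun t => (hg_pos z t).le) ((hgi z).integrableOn)]
      rw [hsupp, Set.univ_inter]
      exact hC_vol
    exact this
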